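/- Let φ be the Laplace exponent of a killed compound Poisson subordinator with B = φ(∞) = q + μ̄(0) ∈ (0,∞). Then lim_{x→∞} x φ'(x) = 0, and consequently, with φ⋆(x) = x/φ(x) and its inverse ϕ⋆, one has ϕ⋆(x) ∼ Bx and ϕ⋆'(x) → B as x → ∞. -/

import Mathlib

open MeasureTheory Set Filter

lemma aux_texp (t : ℝ) (ht : 0 ≤ t) : t * Real.exp (-t) ≤ Real.exp (-1) := by
  have h : t ≤ Real.exp (t - 1) := by
    have := Real.add_one_le_exp (t - 1)
    linarith
  calc t * Real.exp (-t) ≤ Real.exp (t - 1) * Real.exp (-t) :=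
        mul_le_mul_of_nonneg_right h (Real.exp_nonneg _)
    _ = Real.exp (-1) := by rw [← Real.exp_add]; congr 1; ring

lemma aux_concave (u l : ℝ) (hl0 : 0 ≤ l) (hl1 : l ≤ 1) :
    l * (1 - Real.exp (-u)) ≤ 1 - Real.exp (-(l * u)) := by
  have h := convexOn_exp.2 (Set.mem_univ (0:ℝ)) (Set.mem_univ (-u))
      (by linarith : (0:ℝ) ≤ 1 - l) hl0 (by ring)
  simp only [smul_eq_mul, mul_zero, zero_add, Real.exp_zero, mul_one] at h
  have h2 : l * -u = -(l * u) := by ring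
  rw [h2] at h
  linarith

theorem compound_poisson_inverse_asymptotics
    (q : ℝ) (hq : 0 ≤ q)
    (μ : Measure ℝ)
    (hfin : μ (Set.Ioi (0:ℝ)) < ⊤)
    (B : ℝ) (hB : B = q + (μ (Set.Ioi (0:ℝ))).toReal) (hBpos : 0 < B)
    (φ : ℝ → ℝ)
    (hφ : ∀ x : ℝ, 0 < x →
      φ x = q + ∫ y in Set.Ioi (0:ℝ), (1 - Real.exp (-(x * y))) ∂μ)
    (hderiv : ∀ x : ℝ, 0 < x →
      HasDerivAt φ (∫ y in Set.Ioi (0:ℝ), y * Real.exp (-(x * y)) ∂μ) x)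
    (hpos : ∀ x : ℝ, 0 < x → 0 < φ x)
    (ψ : ℝ → ℝ)
    (hinv : ∀ᶠ x in atTop, 0 < ψ x ∧ ψ x / φ (ψ x) = x)
    (hψdiff : ∀ᶠ x in atTop, DifferentiableAt ℝ ψ x) :
    Tendsto (fun x : ℝ => x * deriv φ x) atTop (nhds 0)
      ∧ Tendsto (fun x : ℝ => ψ x / (B * x)) atTop (nhds 1)
      ∧ Tendsto (fun x : ℝ => deriv ψ x) atTop (nhds B) := by
  haveI hνfin : IsFiniteMeasure (μ.restrict (Set.Ioi (0:ℝ))) := by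
    constructor
    rw [Measure.restrict_apply_univ]
    exact hfin
  have hae : ∀ᵐ y ∂(μ.restrict (Set.Ioi (0:ℝ))), 0 < y := by
    filter_upwards [ae_restrict_mem measurableSet_Ioi] with y hy using hy
  -- integrability of 1 - exp(-(x y))
  have hint1 : ∀ x : ℝ, 0 < x →
      Integrable (fun y => 1 - Real.exp (-(x * y))) (μ.restrict (Set.Ioi (0:ℝ))) := by
    intro x hx
    apply (integrable_const (1:ℝ)).mono'
    · exact Continuous.aestronglyMeasurable (by fun_prop)
    · filter_upwards [hae] with y hy
      have h1 : Real.exp (-(x * y)) ≤ 1 := by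
        rw [Real.exp_le_one_iff]
        nlinarith
      have h2 := Real.exp_pos (-(x * y))
      rw [Real.norm_eq_abs, abs_le]
      constructor <;> linarith
  have hkey : ∀ s t : ℝ, 0 < s → s ≤ t → s / φ s ≤ t / φ t := by
    intro s t hs hst
    have ht : 0 < t := lt_of_lt_of_le hs hst
    rw [div_le_div_iff₀ (hpos s hs) (hpos t ht), hφ s hs, hφ t ht]
    have hle : ∫ y in Set.Ioi (0:ℝ), s * (1 - Real.exp (-(t * y))) ∂μ
        ≤ ∫ y in Set.Ioi (0:ℝ), t * (1 - Real.exp (-(s * y))) ∂μ := by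
      apply integral_mono ((hint1 t ht).const_mul s) ((hint1 s hs).const_mul t)
      intro y
      have h2 : (s / t) * (t * y) = s * y := by field_simp
      have h := aux_concave (t * y) (s / t) (by positivity)
        (by rw [div_le_one ht]; exact hst)
      rw [h2] at h
      have h3 := mul_le_mul_of_nonneg_left h ht.le
      calc s * (1 - Real.exp (-(t * y)))
          = t * ((s / t) * (1 - Real.exp (-(t * y)))) := by field_simp
        _ ≤ t * (1 - Real.exp (-(s * y))) := h3
    rw [integral_const_mul, integral_const_mul] at hle
    have hq' : s * q ≤ t * q := mul_le_mul_of_nonneg_right hst hq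
    rw [mul_add, mul_add]
    exact add_le_add hq' hle
  -- Part 1 : x φ'(x) → 0
  have hT1 : Tendsto (fun x : ℝ => x * deriv φ x) atTop (nhds 0) := by
    have hDCT : Tendsto (fun x : ℝ => ∫ y in Set.Ioi (0:ℝ),
        x * y * Real.exp (-(x * y)) ∂μ) atTop (nhds 0) := by
      have h0 : Tendsto (fun x : ℝ => ∫ y in Set.Ioi (0:ℝ),
          x * y * Real.exp (-(x * y)) ∂μ) atTop
          (nhds (∫ _y in Set.Ioi (0:ℝ), (0:ℝ) ∂μ)) := ?_
      · simpa using h0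
      apply tendsto_integral_filter_of_dominated_convergence
        (fun _ => Real.exp (-1))
      · filter_upwards with x
        exact Continuous.aestronglyMeasurable (by fun_prop)
      · filter_upwards [eventually_ge_atTop (0:ℝ)] with x hx
        filter_upwards [hae] with y hy
        have hxy : 0 ≤ x * y := by positivity
        have h := aux_texp (x * y) hxy
        rw [Real.norm_eq_abs, abs_of_nonneg (by positivity)]
        calc x * y * Real.exp (-(x * y)) = (x * y) * Real.exp (-(x * y)) := by ring
          _ ≤ Real.exp (-1) := h
      · exact integrable_const _
      · filter_upwards [hae] with y hy
        have h1 : Tendsto (fun x : ℝ => x * y) atTop atTop :=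
          tendsto_id.atTop_mul_const hy
        have h2 : Tendsto (fun t : ℝ => t * Real.exp (-t)) atTop (nhds 0) := by
          simpa using Real.tendsto_pow_mul_exp_neg_atTop_nhds_zero 1
        exact h2.comp h1
    have heq : ∀ᶠ x in atTop, (∫ y in Set.Ioi (0:ℝ),
        x * y * Real.exp (-(x * y)) ∂μ) = x * deriv φ x := by
      filter_upwards [eventually_gt_atTop (0:ℝ)] with x hx
      rw [(hderiv x hx).deriv, ← integral_const_mul]
      congr 1
      funext y
      ring
    exact hDCT.congr' heq
  -- Part 2 : φ → B
  have hφB : Tendsto φ atTop (nhds B) := by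
    have hDCT : Tendsto (fun x : ℝ => ∫ y in Set.Ioi (0:ℝ),
        (1 - Real.exp (-(x * y))) ∂μ) atTop (nhds ((μ (Set.Ioi (0:ℝ))).toReal)) := by
      have h1 : (μ (Set.Ioi (0:ℝ))).toReal = ∫ y in Set.Ioi (0:ℝ), (1:ℝ) ∂μ := by
        rw [integral_const, measureReal_restrict_apply_univ, measureReal_def, smul_eq_mul, mul_one]
      rw [h1]
      apply tendsto_integral_filter_of_dominated_convergence (fun _ => (1:ℝ))
      · filter_upwards with x
        exact Continuous.aestronglyMeasurable (by fun_prop)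
      · filter_upwards [eventually_ge_atTop (0:ℝ)] with x hx
        filter_upwards [hae] with y hy
        have h1 : Real.exp (-(x * y)) ≤ 1 := by
          rw [Real.exp_le_one_iff]; nlinarith
        have h2 := Real.exp_pos (-(x * y))
        rw [Real.norm_eq_abs, abs_le]
        constructor <;> linarith
      · exact integrable_const _
      · filter_upwards [hae] with y hy
        have h1 : Tendsto (fun x : ℝ => -(x * y)) atTop atBot := by
          rw [tendsto_neg_atBot_iff]
          exact tendsto_id.atTop_mul_const hy
        have h2 : Tendsto (fun x : ℝ => Real.exp (-(x * y))) atTop (nhds 0) :=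
          Real.tendsto_exp_atBot.comp h1
        have := tendsto_const_nhds.sub h2 (f := fun _ : ℝ => (1:ℝ))
        simpa using this
    have heq : ∀ᶠ x in atTop, q + (∫ y in Set.Ioi (0:ℝ),
        (1 - Real.exp (-(x * y))) ∂μ) = φ x := by
      filter_upwards [eventually_gt_atTop (0:ℝ)] with x hx
      exact (hφ x hx).symm
    have := (tendsto_const_nhds (x := q)).add hDCT
    rw [← hB] at this
    exact this.congr' heq
  -- ψ → ∞
  have hψtop : Tendsto ψ atTop atTop := by
    rw [tendsto_atTop]
    intro b
    have hC0 : (0:ℝ) < max b 1 := lt_of_lt_of_le one_pos (le_max_right _ _)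
    filter_upwards [hinv, eventually_gt_atTop (max b 1 / φ (max b 1))] with x hx hxC
    obtain ⟨hxp, hxe⟩ := hx
    by_contra h
    push_neg at h
    have hψC : ψ x ≤ max b 1 := le_trans h.le (le_max_left _ _)
    have hk := hkey (ψ x) (max b 1) hxp hψC
    rw [hxe] at hk
    linarith
  have hcomp : Tendsto (fun x => φ (ψ x)) atTop (nhds B) := hφB.comp hψtop
  -- Part: ψ x / (B x) → 1
  have hT2 : Tendsto (fun x : ℝ => ψ x / (B * x)) atTop (nhds 1) := by
    have heq : ∀ᶠ x in atTop, φ (ψ x) / B = ψ x / (B * x) := by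
      filter_upwards [hinv, eventually_gt_atTop (0:ℝ)] with x hx hx0
      obtain ⟨hxp, hxe⟩ := hx
      have hφψ := hpos _ hxp
      have hψeq : ψ x = x * φ (ψ x) := (div_eq_iff hφψ.ne').1 hxe
      rw [div_eq_div_iff hBpos.ne' (by positivity : (B * x) ≠ 0)]
      conv_rhs => rw [hψeq]
      ring
    have h := hcomp.div_const B
    rw [div_self hBpos.ne'] at h
    exact h.congr' heq
  refine ⟨hT1, hT2, ?_⟩
  -- Part: deriv ψ → B
  obtain ⟨a, ha⟩ := eventually_atTop.1 hinv
  have hFψ : ∀ᶠ x in atTop,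
      (φ (ψ x) - ψ x * deriv φ (ψ x)) / (φ (ψ x)) ^ 2 * deriv ψ x = 1 := by
    filter_upwards [eventually_gt_atTop a, hψdiff, hinv] with x hxa hd hx
    obtain ⟨hxp, _⟩ := hx
    have hφψ := hpos _ hxp
    have hφd : HasDerivAt φ (deriv φ (ψ x)) (ψ x) :=
      (hderiv _ hxp).differentiableAt.hasDerivAt
    have hF : HasDerivAt (fun t => t / φ t)
        ((1 * φ (ψ x) - ψ x * deriv φ (ψ x)) / (φ (ψ x)) ^ 2) (ψ x) :=
      (hasDerivAt_id (ψ x)).div hφd hφψ.ne'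
    have hchain : HasDerivAt (fun z => ψ z / φ (ψ z))
        ((1 * φ (ψ x) - ψ x * deriv φ (ψ x)) / (φ (ψ x)) ^ 2 * deriv ψ x) x :=
      hF.comp x hd.hasDerivAt
    have hev : (fun z : ℝ => ψ z / φ (ψ z)) =ᶠ[nhds x] fun z : ℝ => z := by
      filter_upwards [Ioi_mem_nhds hxa] with z hz
      exact (ha z hz.le).2
    have hid : HasDerivAt (fun z : ℝ => ψ z / φ (ψ z)) 1 x :=
      (hasDerivAt_id x).congr_of_eventuallyEq hev
    have := hchain.unique hid
    rw [one_mul] at this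
    exact this
  have hnum : Tendsto (fun x => (φ (ψ x) - ψ x * deriv φ (ψ x)) / (φ (ψ x)) ^ 2)
      atTop (nhds ((B - 0) / B ^ 2)) :=
    Tendsto.div (hcomp.sub (hT1.comp hψtop)) (hcomp.pow 2) (by positivity)
  have hlim : (B - 0) / B ^ 2 = 1 / B := by
    rw [sub_zero, pow_two, div_mul_eq_div_div, div_self hBpos.ne']
  rw [hlim] at hnum
  have hfinal : ∀ᶠ x in atTop, ((φ (ψ x) - ψ x * deriv φ (ψ x)) / (φ (ψ x)) ^ 2)⁻¹
      = deriv ψ x := by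
    filter_upwards [hFψ] with x hx
    exact inv_eq_of_mul_eq_one_right hx
  have hinv2 : Tendsto (fun x => ((φ (ψ x) - ψ x * deriv φ (ψ x)) / (φ (ψ x)) ^ 2)⁻¹)
      atTop (nhds (1 / B)⁻¹) :=
    hnum.inv₀ (by positivity)
  rw [one_div, inv_inv] at hinv2
  exact hinv2.congr' hfinal
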